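/- Let μ ∈ (1,2) and n ≥ 1. For any x, x' ∈ [0,1), if x ≤ x' then γ^n(x) ⪯ γ^n(x') in lexicographic order. -/
import Mathlib


open Set MeasureTheory

/-- The tent map `f(x) = μx` for `x ≤ 1/2` and `μ(1-x)` for `x ≥ 1/2`. -/
noncomputable def tentMap (μ : ℝ) (x : ℝ) : ℝ :=
  if x ≤ 1/2 then μ * x else μ * (1 - x)

/-- `tentBit μ x k` is the `(k+1)`-st bit `b_{k+1}` of the tent code of `x`. -/
noncomputable def tentBit (μ x : ℝ) : ℕ → Bool
  | 0 => if 1/2 ≤ x then true else false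
  | k + 1 =>
    if (tentMap μ)^[k+1] x < 1/2 then tentBit μ x k
    else if 1/2 < (tentMap μ)^[k+1] x then !(tentBit μ x k)
    else true

/-- The tent code `γ^n(x) = b_1 ⋯ b_n`. -/
noncomputable def tentCode (μ : ℝ) (n : ℕ) (x : ℝ) : List Bool :=
  (List.range n).map (tentBit μ x)

/-- The tent language `L_n = {γ^n(x) : x ∈ [0,1)}`. -/
def tentLang (μ : ℝ) (n : ℕ) : Set (List Bool) :=
  {w | ∃ x ∈ Set.Ico (0:ℝ) 1, tentCode μ n x = w}

/-- The segment-type `T(w) = {f^n(x) : x ∈ [0,1), γ^n(x) = w}`. -/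
def segType (μ : ℝ) (n : ℕ) (w : List Bool) : Set ℝ :=
  {y | ∃ x ∈ Set.Ico (0:ℝ) 1, tentCode μ n x = w ∧ (tentMap μ)^[n] x = y}

/-- The set of segment-types `𝒯_n = {T(w) : w ∈ L_n}`. -/
def typeSet (μ : ℝ) (n : ℕ) : Set (Set ℝ) :=
  {S | ∃ w ∈ tentLang μ n, segType μ n w = S}

/-- `I_i = T(γ^i(1/2))`. -/
noncomputable def Iseg (μ : ℝ) (i : ℕ) : Set ℝ :=
  segType μ i (tentCode μ i (1/2))

/-- `Ī_i = T(c̄_i)` where `c̄_i` is the bitwise complement of `γ^i(1/2)`. -/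
noncomputable def Isegbar (μ : ℝ) (i : ℕ) : Set ℝ :=
  segType μ i ((tentCode μ i (1/2)).map (fun b => !b))

/-- The length of the interval `T(w)` (zero if `T(w)` is empty). -/
noncomputable def segLen (μ : ℝ) (n : ℕ) (w : List Bool) : ℝ :=
  (MeasureTheory.volume (segType μ n w)).toReal


/-- The "previous bit" used in the recursion for `tentBit`; for index `0` it is `false`. -/
noncomputable def prevBit (μ x : ℝ) : ℕ → Bool
  | 0 => false
  | k + 1 => tentBit μ x k

lemma tentBit_eq (μ x : ℝ) (k : ℕ) : tentBit μ x k =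
    if (tentMap μ)^[k] x < 1/2 then prevBit μ x k
    else if 1/2 < (tentMap μ)^[k] x then !(prevBit μ x k)
    else true := by
  cases k with
  | zero =>
    show (if 1/2 ≤ x then true else false) = _
    simp only [prevBit, Function.iterate_zero, id_eq, Bool.not_false]
    split_ifs with h1 h2 h3 <;> first | rfl | (exfalso; linarith)
  | succ k => rfl

lemma prevBit_congr (μ x x' : ℝ) (k : ℕ)
    (h : ∀ j < k, tentBit μ x j = tentBit μ x' j) :
    prevBit μ x k = prevBit μ x' k := by
  cases k with
  | zero => rfl
  | succ j => exact h j (Nat.lt_succ_self j)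

lemma bit_iff_false_prev (μ x : ℝ) (k : ℕ) (hc : prevBit μ x k = false) :
    tentBit μ x k = true ↔ 1/2 ≤ (tentMap μ)^[k] x := by
  rw [tentBit_eq, hc]
  constructor
  · intro hb
    by_contra hcon
    push_neg at hcon
    rw [if_pos hcon] at hb
    exact Bool.false_ne_true hb
  · intro hv
    rw [if_neg (not_lt.2 hv)]
    by_cases h2 : 1/2 < (tentMap μ)^[k] x
    · rw [if_pos h2]; rfl
    · rw [if_neg h2]

lemma bit_iff_true_prev (μ x : ℝ) (k : ℕ) (hc : prevBit μ x k = true) :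
    tentBit μ x k = true ↔ (tentMap μ)^[k] x ≤ 1/2 := by
  rw [tentBit_eq, hc]
  constructor
  · intro hb
    by_contra hcon
    push_neg at hcon
    rw [if_neg (not_lt.2 (le_of_lt hcon)), if_pos hcon] at hb
    simp at hb
  · intro hv
    by_cases h1 : (tentMap μ)^[k] x < 1/2
    · rw [if_pos h1]
    · rw [if_neg h1, if_neg (not_lt.2 hv)]

lemma tentMap_le_of_le {μ : ℝ} (hμ : 0 < μ) {a b : ℝ} (ha : a ≤ 1/2) (hb : b ≤ 1/2)
    (h : a ≤ b) : tentMap μ a ≤ tentMap μ b := by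
  unfold tentMap
  rw [if_pos ha, if_pos hb]
  nlinarith

lemma tentMap_of_ge {μ : ℝ} {a : ℝ} (ha : 1/2 ≤ a) : tentMap μ a = μ * (1 - a) := by
  unfold tentMap
  split_ifs with h
  · have hha : a = 1/2 := le_antisymm h ha
    rw [hha]; ring
  · rfl

lemma tentMap_anti {μ : ℝ} (hμ : 0 < μ) {a b : ℝ} (ha : 1/2 ≤ a) (hb : 1/2 ≤ b)
    (h : a ≤ b) : tentMap μ b ≤ tentMap μ a := by
  rw [tentMap_of_ge ha, tentMap_of_ge hb]
  nlinarith

lemma tent_key (μ : ℝ) (hμ : 0 < μ) (x x' : ℝ) (hle : x ≤ x') :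
    ∀ m, (∀ j < m, tentBit μ x j = tentBit μ x' j) →
      (prevBit μ x m = false → (tentMap μ)^[m] x ≤ (tentMap μ)^[m] x') ∧
      (prevBit μ x m = true → (tentMap μ)^[m] x' ≤ (tentMap μ)^[m] x) := by
  intro m
  induction m with
  | zero =>
    intro _
    exact ⟨fun _ => hle, fun h => by simp [prevBit] at h⟩
  | succ k ih =>
    intro hagree
    have ihk := ih (fun j hj => hagree j (Nat.lt_succ_of_lt hj))
    have hbit : tentBit μ x k = tentBit μ x' k := hagree k (Nat.lt_succ_self k)
    have hprev : prevBit μ x k = prevBit μ x' k :=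
      prevBit_congr μ x x' k (fun j hj => hagree j (Nat.lt_succ_of_lt hj))
    simp only [prevBit, Function.iterate_succ_apply']
    cases hc : prevBit μ x k with
    | false =>
      have hc' : prevBit μ x' k = false := by rw [← hprev]; exact hc
      have hvv : (tentMap μ)^[k] x ≤ (tentMap μ)^[k] x' := ihk.1 hc
      have h1 := bit_iff_false_prev μ x k hc
      have h1' := bit_iff_false_prev μ x' k hc'
      cases hbv : tentBit μ x k with
      | false =>
        have hs : (tentMap μ)^[k] x' < 1/2 := by
          by_contra hcon
          have := h1'.mpr (le_of_not_gt hcon)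
          rw [← hbit, hbv] at this
          exact Bool.false_ne_true this
        have hs0 : (tentMap μ)^[k] x < 1/2 := lt_of_le_of_lt hvv hs
        refine ⟨fun _ => tentMap_le_of_le hμ (le_of_lt hs0) (le_of_lt hs) hvv, fun h => by simp at h⟩
      | true =>
        have hs0 : 1/2 ≤ (tentMap μ)^[k] x := h1.mp hbv
        have hs : 1/2 ≤ (tentMap μ)^[k] x' := le_trans hs0 hvv
        refine ⟨fun h => by simp at h, fun _ => tentMap_anti hμ hs0 hs hvv⟩
    | true =>
      have hc' : prevBit μ x' k = true := by rw [← hprev]; exact hc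
      have hvv : (tentMap μ)^[k] x' ≤ (tentMap μ)^[k] x := ihk.2 hc
      have h1 := bit_iff_true_prev μ x k hc
      have h1' := bit_iff_true_prev μ x' k hc'
      cases hbv : tentBit μ x k with
      | true =>
        have hs0 : (tentMap μ)^[k] x ≤ 1/2 := h1.mp hbv
        have hs : (tentMap μ)^[k] x' ≤ 1/2 := le_trans hvv hs0
        refine ⟨fun h => by simp at h, fun _ => tentMap_le_of_le hμ hs hs0 hvv⟩
      | false =>
        have hs0 : 1/2 < (tentMap μ)^[k] x := by
          by_contra hcon
          have := h1.mpr (le_of_not_gt hcon)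
          rw [hbv] at this
          exact Bool.false_ne_true this
        have hs : 1/2 < (tentMap μ)^[k] x' := by
          by_contra hcon
          have := h1'.mpr (le_of_not_gt hcon)
          rw [← hbit, hbv] at this
          exact Bool.false_ne_true this
        refine ⟨fun _ => tentMap_anti hμ (le_of_lt hs) (le_of_lt hs0) hvv, fun h => by simp at h⟩


/-- monotonicity of the tent code in the lexicographic order. -/
theorem tent_code_lex_mono (μ : ℝ) (hμ1 : 1 < μ) (hμ2 : μ < 2) (n : ℕ) (hn : 1 ≤ n)
    (x x' : ℝ) (hx : x ∈ Set.Ico (0:ℝ) 1) (hx' : x' ∈ Set.Ico (0:ℝ) 1) (hle : x ≤ x') :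
    tentCode μ n x = tentCode μ n x' ∨
      ∃ i < n, (∀ j < i, tentBit μ x j = tentBit μ x' j) ∧
        tentBit μ x i = false ∧ tentBit μ x' i = true := by
  classical
  by_cases h : ∀ j < n, tentBit μ x j = tentBit μ x' j
  · left
    unfold tentCode
    exact List.map_congr_left (fun j hj => h j (List.mem_range.mp hj))
  · right
    push_neg at h
    have hex : ∃ j, j < n ∧ tentBit μ x j ≠ tentBit μ x' j := by
      obtain ⟨j, hj1, hj2⟩ := h
      exact ⟨j, hj1, hj2⟩
    have hispec := Nat.find_spec hex
    set i := Nat.find hex with hi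
    have hmin : ∀ j < i, tentBit μ x j = tentBit μ x' j := by
      intro j hj
      by_contra hne
      exact Nat.find_min hex hj ⟨lt_trans hj hispec.1, hne⟩
    have hμ : 0 < μ := by linarith
    have hkey := tent_key μ hμ x x' hle i hmin
    have hprev := prevBit_congr μ x x' i hmin
    have hpair : tentBit μ x i = false ∧ tentBit μ x' i = true := by
      cases hc : prevBit μ x i with
      | false =>
        have hc' : prevBit μ x' i = false := by rw [← hprev]; exact hc
        have hvv := hkey.1 hc
        have h1 := bit_iff_false_prev μ x i hc
        have h1' := bit_iff_false_prev μ x' i hc'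
        have hbx : tentBit μ x i = false := by
          by_contra hb
          rw [Bool.not_eq_false] at hb
          have := h1'.mpr (le_trans (h1.mp hb) hvv)
          exact hispec.2 (hb.trans this.symm)
        have hbx' : tentBit μ x' i = true := by
          by_contra hb
          rw [Bool.not_eq_true] at hb
          exact hispec.2 (hbx.trans hb.symm)
        exact ⟨hbx, hbx'⟩
      | true =>
        have hc' : prevBit μ x' i = true := by rw [← hprev]; exact hc
        have hvv := hkey.2 hc
        have h1 := bit_iff_true_prev μ x i hc
        have h1' := bit_iff_true_prev μ x' i hc'
        have hbx' : tentBit μ x' i = true := by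
          by_contra hb
          rw [Bool.not_eq_true] at hb
          cases hbv : tentBit μ x i with
          | false => exact hispec.2 (hbv.trans hb.symm)
          | true =>
            have := h1'.mpr (le_trans hvv (h1.mp hbv))
            rw [hb] at this
            exact Bool.false_ne_true this
        have hbx : tentBit μ x i = false := by
          by_contra hb
          rw [Bool.not_eq_false] at hb
          exact hispec.2 (hb.trans hbx'.symm)
        exact ⟨hbx, hbx'⟩
    exact ⟨i, hispec.1, hmin, hpair.1, hpair.2⟩
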